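/- Let Q be a fine saturated monoid (finitely generated, integral, saturated) and Q → P a morphism of fine saturated monoids inducing an isomorphism Q^gp ≅ P^gp. Then Q ⊆ P inside the common groupification, and there exist elements f₁, ..., fₙ, s ∈ Q such that P is generated by the elements f₁/s, ..., fₙ/s in Q^gp; consequently, setting I ⊆ Q the ideal generated by f₁,...,fₙ,s, one has P = ⋃_{n ≥ 0} (Iⁿ : sⁿ), i.e., P equals the union over n of the sets {x ∈ Q^gp : sⁿ·x ∈ Iⁿ}. -/

import Mathlib

/-- Let `Q ⊆ P` be fine saturated monoids inside a common groupification `G = Q^gp = P^gp`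
(the inclusion `Q → P` induces an isomorphism on groupifications). Then there exist
`f₁, …, fₙ, s ∈ Q` such that `P` is generated by the elements `fᵢ/s` and, with `I ⊆ Q` the
ideal generated by `f₁, …, fₙ, s`, one has `P = ⋃ₙ (Iⁿ : sⁿ)`: an element `x ∈ G` lies in
`P` iff for some `m`, `sᵐ·x` is a product of `m` of the generators times an element of `Q`. -/
theorem stmt_10 {G : Type u} [CommGroup G] (Q P : Submonoid G) (hQP : Q ≤ P)
    (hgenQ : Subgroup.closure (Q : Set G) = ⊤)
    (hQfg : Q.FG) (hPfg : P.FG)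
    (hQsat : ∀ (x : G) (n : ℕ), 1 ≤ n → x ^ n ∈ Q → x ∈ Q)
    (hPsat : ∀ (x : G) (n : ℕ), 1 ≤ n → x ^ n ∈ P → x ∈ P) :
    ∃ (n : ℕ) (fe : Fin n → G) (s : G), (∀ i, fe i ∈ Q) ∧ s ∈ Q ∧
      P = Submonoid.closure (Set.range fun i => fe i * s⁻¹) ∧
      ∀ x : G, x ∈ P ↔ ∃ (m : ℕ) (c : Fin m → G),
        (∀ j, c j ∈ insert s (Set.range fe)) ∧
        ∃ q ∈ Q, s ^ m * x = (∏ j, c j) * q := by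
  classical
  -- Every element of G is a quotient of two elements of Q
  have hrep : ∀ x : G, ∃ a ∈ Q, ∃ b ∈ Q, x = a * b⁻¹ := by
    intro x
    have hx : x ∈ Subgroup.closure (Q : Set G) := hgenQ ▸ Subgroup.mem_top x
    induction hx using Subgroup.closure_induction with
    | mem y hy => exact ⟨y, hy, 1, Q.one_mem, by simp⟩
    | one => exact ⟨1, Q.one_mem, 1, Q.one_mem, by simp⟩
    | mul y z _ _ hy hz =>
        obtain ⟨a, ha, b, hb, rfl⟩ := hy
        obtain ⟨c, hc, d, hd, rfl⟩ := hz
        exact ⟨a * c, Q.mul_mem ha hc, b * d, Q.mul_mem hb hd, by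
          rw [mul_inv, mul_mul_mul_comm]⟩
    | inv y _ hy =>
        obtain ⟨a, ha, b, hb, rfl⟩ := hy
        exact ⟨b, hb, a, ha, by group⟩
  obtain ⟨T, hT⟩ := hPfg
  set k := T.card with hk
  set p : Fin k → G := fun i => ((T.equivFin.symm i : T) : G) with hp
  have hrange : Set.range p = (T : Set G) := by
    ext x
    constructor
    · rintro ⟨i, rfl⟩
      exact (T.equivFin.symm i).2
    · intro hx
      exact ⟨T.equivFin ⟨x, hx⟩, by simp [hp]⟩
  have hpP : ∀ i, p i ∈ P := fun i => hT ▸ Submonoid.subset_closure (by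
    rw [← hrange] at *; exact ⟨i, rfl⟩)
  choose a ha b hb hab using fun i => hrep (p i)
  set s : G := ∏ i, b i with hs
  have hsQ : s ∈ Q := Q.prod_mem fun i _ => hb i
  set fe : Fin k → G := fun i => p i * s with hfe
  have hfeQ : ∀ i, fe i ∈ Q := by
    intro i
    have h1 : p i * s = a i * ∏ j ∈ Finset.univ.erase i, b j := by
      rw [hab i, hs, ← Finset.mul_prod_erase _ _ (Finset.mem_univ i)]
      group
    show p i * s ∈ Q
    rw [h1]
    exact Q.mul_mem (ha i) (Q.prod_mem fun j _ => hb j)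
  have hfes : ∀ i, fe i * s⁻¹ = p i := fun i => by rw [hfe]; group
  have hclos : P = Submonoid.closure (Set.range fun i => fe i * s⁻¹) := by
    have h2 : (fun i => fe i * s⁻¹) = p := funext hfes
    rw [h2, hrange, hT]
  refine ⟨k, fe, s, hfeQ, hsQ, hclos, ?_⟩
  intro x
  constructor
  · intro hx
    rw [← hT] at hx
    obtain ⟨l, hl, rfl⟩ := Submonoid.exists_list_of_mem_closure hx
    refine ⟨l.length, fun j => l.get j * s, ?_, 1, Q.one_mem, ?_⟩
    · intro j
      have : l.get j ∈ (T : Set G) := hl _ (l.get_mem _)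
      rw [← hrange] at this
      obtain ⟨i, hi⟩ := this
      right
      exact ⟨i, by show p i * s = l.get j * s; rw [hi]⟩
    · rw [Finset.prod_mul_distrib, Finset.prod_const, Finset.card_univ,
        Fintype.card_fin]
      have : ∏ j : Fin l.length, l.get j = l.prod := by
        simpa using List.prod_univ_get l
      rw [this, mul_one, mul_comm]
  · rintro ⟨m, c, hc, q, hq, heq⟩
    have hcP : ∀ j, c j * s⁻¹ ∈ P := by
      intro j
      rcases hc j with h | ⟨i, hi⟩
      · rw [h]; simpa using P.one_mem
      · rw [← hi, hfes]; exact hpP i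
    have hx : x = (∏ j : Fin m, c j) * (s ^ m)⁻¹ * q := by
      have h3 : (s ^ m)⁻¹ * (s ^ m * x) = x := inv_mul_cancel_left _ _
      rw [← h3, heq, ← mul_assoc, mul_comm ((s ^ m)⁻¹) (∏ j, c j)]
    have hprod : (∏ j : Fin m, c j * s⁻¹) = (∏ j : Fin m, c j) * (s ^ m)⁻¹ := by
      rw [Finset.prod_mul_distrib, Finset.prod_const, Finset.card_univ,
        Fintype.card_fin, inv_pow]
    rw [hx, ← hprod]
    exact P.mul_mem (P.prod_mem fun j _ => hcP j) (hQP hq)
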